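/- Let C be a triangulated category equipped with a weight structure w, and let m' < m ≤ n be integers. If a morphism g : M → N kills weights m,…,n and a morphism h : N → O kills weights m',…,m−1, then the composite h ∘ g kills weights m',…,n. -/

import Mathlib

open CategoryTheory CategoryTheory.Limits CategoryTheory.Pretriangulated ZeroObject

universe v u

variable (C : Type u) [Category.{v} C] [HasZeroObject C] [Preadditive C] [HasShift C ℤ]
  [∀ n : ℤ, (shiftFunctor C n).Additive] [Pretriangulated C]

/-- A weight structure on a triangulated category `C`: a pair of retract-closed classes
`le = C_{w≤0}` and `ge = C_{w≥0}` satisfying semi-invariance with respect to translations,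
orthogonality, and the existence of weight decompositions. -/
structure WeightStructure where
  /-- the class `C_{w≤0}` -/
  le : Set C
  /-- the class `C_{w≥0}` -/
  ge : Set C
  /-- `C_{w≤0}` is closed under retracts -/
  le_retract : ∀ ⦃X Y : C⦄ (i : X ⟶ Y) (r : Y ⟶ X), i ≫ r = 𝟙 X → le Y → le X
  /-- `C_{w≥0}` is closed under retracts -/
  ge_retract : ∀ ⦃X Y : C⦄ (i : X ⟶ Y) (r : Y ⟶ X), i ≫ r = 𝟙 X → ge Y → ge X
  /-- `C_{w≤0} ⊆ C_{w≤0}[1]`, i.e. `X ∈ C_{w≤0} → X[-1] ∈ C_{w≤0}` -/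
  le_shift : ∀ ⦃X : C⦄, le X → le ((shiftFunctor C (-1 : ℤ)).obj X)
  /-- `C_{w≥0}[1] ⊆ C_{w≥0}`, i.e. `X ∈ C_{w≥0} → X[1] ∈ C_{w≥0}` -/
  ge_shift : ∀ ⦃X : C⦄, ge X → ge ((shiftFunctor C (1 : ℤ)).obj X)
  /-- orthogonality: `Hom(X, Y[1]) = 0` for `X ∈ C_{w≤0}`, `Y ∈ C_{w≥0}` -/
  orth : ∀ ⦃X Y : C⦄, le X → ge Y → ∀ f : X ⟶ (shiftFunctor C (1 : ℤ)).obj Y, f = 0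
  /-- existence of weight decompositions -/
  decomp : ∀ M : C, ∃ (X Y : C) (f : X ⟶ M) (g : M ⟶ Y)
      (h : Y ⟶ (shiftFunctor C (1 : ℤ)).obj X),
      Triangle.mk f g h ∈ (distTriang C) ∧ le X ∧ ge ((shiftFunctor C (-1 : ℤ)).obj Y)

variable {C}

namespace WeightStructure

/-- `X ∈ C_{w≤i} = C_{w≤0}[i]`, i.e. `X[-i] ∈ C_{w≤0}`. -/
def leDeg (w : WeightStructure C) (i : ℤ) (X : C) : Prop :=
  w.le ((shiftFunctor C (-i)).obj X)

/-- `X ∈ C_{w≥i} = C_{w≥0}[i]`, i.e. `X[-i] ∈ C_{w≥0}`. -/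
def geDeg (w : WeightStructure C) (i : ℤ) (X : C) : Prop :=
  w.ge ((shiftFunctor C (-i)).obj X)

/-- The triangle `A → M → B → A[1]` is an `m`-weight decomposition of `M`:
it is distinguished, `A ∈ C_{w≤m}` and `B ∈ C_{w≥m+1}`. -/
def IsWeightDecomp (w : WeightStructure C) (m : ℤ) {A M B : C}
    (f : A ⟶ M) (g : M ⟶ B) (h : B ⟶ (shiftFunctor C (1 : ℤ)).obj A) : Prop :=
  Triangle.mk f g h ∈ (distTriang C) ∧ w.leDeg m A ∧ w.geDeg (m + 1) B

/-- `g : M ⟶ N` kills weights `m,…,n`: there exist an `n`-weight decomposition of `M` and an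
`(m-1)`-weight decomposition of `N` such that the composite `w_{≤n}M → M → N → w_{≥m}N` is `0`. -/
def KillsWeights (w : WeightStructure C) (m n : ℤ) {M N : C} (g : M ⟶ N) : Prop :=
  ∃ (A B A' B' : C) (f : A ⟶ M) (p : M ⟶ B) (δ : B ⟶ (shiftFunctor C (1 : ℤ)).obj A)
    (f' : A' ⟶ N) (p' : N ⟶ B') (δ' : B' ⟶ (shiftFunctor C (1 : ℤ)).obj A'),
    w.IsWeightDecomp n f p δ ∧ w.IsWeightDecomp (m - 1) f' p' δ' ∧ f ≫ g ≫ p' = 0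

/-- `M` is without weights `m,…,n` if `𝟙 M` kills weights `m,…,n`. -/
def WithoutWeights (w : WeightStructure C) (m n : ℤ) (M : C) : Prop :=
  w.KillsWeights m n (𝟙 M)

end WeightStructure


lemma WeightStructure.orth_deg (w : WeightStructure C) {i : ℤ} {X Y : C}
    (hX : w.leDeg (i - 1) X) (hY : w.geDeg i Y) (f : X ⟶ Y) : f = 0 := by
  have hz := w.orth hX hY ((shiftFunctor C (-(i - 1))).map f ≫
    (shiftFunctorAdd' C (-i) 1 (-(i - 1)) (by ring)).hom.app Y)
  have : (shiftFunctor C (-(i - 1))).map f = 0 := by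
    rw [← cancel_mono ((shiftFunctorAdd' C (-i) 1 (-(i - 1)) (by ring)).hom.app Y), hz,
      zero_comp]
  apply (shiftFunctor C (-(i - 1))).map_injective
  rw [this, Functor.map_zero]

/-- Theorem 2.1.1(3): if `g : M ⟶ N` kills weights `m,…,n` and `h : N ⟶ O` kills weights
`m',…,m-1` (for `m' < m`), then `h ∘ g` kills weights `m',…,n`. -/
theorem killsWeights_comp (w : WeightStructure C) (m' m n : ℤ) (h1 : m' < m) (h2 : m ≤ n)
    {M N O : C} (g : M ⟶ N) (h : N ⟶ O)
    (hg : w.KillsWeights m n g) (hh : w.KillsWeights m' (m - 1) h) :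
    w.KillsWeights m' n (g ≫ h) := by
  obtain ⟨A, B, A', B', f, p, δ, f', p', δ', hdM, hdN, hz1⟩ := hg
  obtain ⟨A2, B2, A3, B3, f2, p2, δ2, f3, p3, δ3, hdN2, hdO, hz2⟩ := hh
  refine ⟨A, B, A3, B3, f, p, δ, f3, p3, δ3, hdM, hdO, ?_⟩
  obtain ⟨φ, hφ⟩ : ∃ φ : A ⟶ A', f ≫ g = φ ≫ f' :=
    Pretriangulated.Triangle.coyoneda_exact₂ _ hdN.1 (f ≫ g)
    (by rw [← Category.assoc] at hz1; exact hz1)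
  have hge : w.geDeg m B2 := by
    have := hdN2.2.2
    rwa [show m - 1 + 1 = m by ring] at this
  have hfp2 : f' ≫ p2 = 0 := w.orth_deg hdN.2.1 hge _
  obtain ⟨ψ, hψ⟩ : ∃ ψ : A' ⟶ A2, f' = ψ ≫ f2 :=
    Pretriangulated.Triangle.coyoneda_exact₂ _ hdN2.1 f' hfp2
  have hz2' : f2 ≫ h ≫ p3 = 0 := hz2
  calc f ≫ (g ≫ h) ≫ p3 = (f ≫ g) ≫ h ≫ p3 := by simp
    _ = φ ≫ f' ≫ h ≫ p3 := by rw [hφ]; simp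
    _ = φ ≫ ψ ≫ f2 ≫ h ≫ p3 := by rw [hψ]; simp
    _ = 0 := by rw [hz2', comp_zero, comp_zero]
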